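/- Let C be a triangulated category with shift Σ and let D be a full additive abelian subcategory of C such that every short exact sequence in D can be completed to an exact triangle in C (a distinguished abelian subcategory). Then for every short exact sequence 0 → X →f Y →g Z → 0 in D, the morphism h : Z → Σ(X) completing (f,g) to an exact triangle X → Y → Z → Σ(X) in C is unique. -/

import Mathlib

universe v u v' u'

open CategoryTheory Category Limits Pretriangulated

/-- Let `C` be a triangulated category with shift `Σ` and `D` a distinguished
abelian subcategory of `C` (encoded as a fully faithful additive functor `ι : D ⥤ C` from
an abelian category such that every short exact sequence in `D` can be completed to a
distinguished triangle in `C`).  Then for every short exact sequence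
`0 → X → Y → Z → 0` in `D`, the morphism `h : Z → Σ X` completing it to a distinguished
triangle in `C` is unique. -/
theorem stmt17 {C : Type u} [Category.{v} C] [HasZeroObject C] [HasShift C ℤ]
    [Preadditive C] [∀ n : ℤ, (CategoryTheory.shiftFunctor C n).Additive] [Pretriangulated C]
    {D : Type u'} [Category.{v'} D] [Abelian D]
    (ι : D ⥤ C) [ι.Full] [ι.Faithful] [ι.Additive]
    (hdist : ∀ S : ShortComplex D, S.ShortExact →
      ∃ h : ι.obj S.X₃ ⟶ (ι.obj S.X₁)⟦(1 : ℤ)⟧,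
        Triangle.mk (ι.map S.f) (ι.map S.g) h ∈ distTriang C)
    (S : ShortComplex D) (hS : S.ShortExact)
    (h h' : ι.obj S.X₃ ⟶ (ι.obj S.X₁)⟦(1 : ℤ)⟧)
    (hh : Triangle.mk (ι.map S.f) (ι.map S.g) h ∈ distTriang C)
    (hh' : Triangle.mk (ι.map S.f) (ι.map S.g) h' ∈ distTriang C) :
    h = h' := by
  obtain ⟨c, hc₁, hc₂⟩ := complete_distinguished_triangle_morphism _ _ hh hh'
    (𝟙 (ι.obj S.X₁)) (𝟙 (ι.obj S.X₂)) (by exact (comp_id _).trans (id_comp _).symm)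
  obtain ⟨d, hd⟩ := ι.map_surjective c
  have hgd : S.g ≫ d = S.g := by
    apply ι.map_injective
    simp only [Functor.map_comp, hd]
    exact hc₁.trans (id_comp _)
  have : Epi S.g := hS.epi_g
  have hd1 : d = 𝟙 _ := by
    rw [← cancel_epi S.g, hgd, comp_id]
  have hc : c = 𝟙 (ι.obj S.X₃) := by rw [← hd, hd1, ι.map_id]
  have h2 : h ≫ (shiftFunctor C 1).map (𝟙 (ι.obj S.X₁)) = c ≫ h' := hc₂
  exact (comp_id h).symm.trans ((congrArg (h ≫ ·) ((shiftFunctor C (1 : ℤ)).map_id (ι.obj S.X₁))).symm.trans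
    (h2.trans ((congrArg (· ≫ h') hc).trans (id_comp h'))))
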